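/- For every prime p and every r ≥ 2, the equality-with-zero function EQ : Z_{p^r} → Z_{p^r}, defined by EQ(0) = 1 and EQ(x) = 0 for x ≠ 0, is not a polynomial function over Z_{p^r}; that is, there is no polynomial P with coefficients in Z_{p^r} such that P(x) = EQ(x) for all x ∈ Z_{p^r}. -/

import Mathlib

theorem stmt_8 (p : ℕ) (hp : p.Prime) (r : ℕ) (hr : 2 ≤ r) :
    ¬ ∃ P : Polynomial (ZMod (p ^ r)),
      ∀ x : ZMod (p ^ r), P.eval x = if x = 0 then 1 else 0 := by
  haveI : Fact p.Prime := ⟨hp⟩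
  rintro ⟨P, hP⟩
  -- the element p^(r-1) is nonzero in ZMod (p^r)
  have hlt : p ^ (r - 1) < p ^ r := Nat.pow_lt_pow_right hp.one_lt (by omega)
  have hne : ((p : ZMod (p ^ r)) ^ (r - 1)) ≠ 0 := by
    have : ((p ^ (r - 1) : ℕ) : ZMod (p ^ r)) ≠ 0 := by
      rw [Ne, ZMod.natCast_eq_zero_iff]
      intro h
      have := Nat.le_of_dvd (Nat.pow_pos hp.pos) h
      omega
    simpa using this
  have h1 : P.eval 0 = 1 := by simpa using hP 0
  have h2 : P.eval ((p : ZMod (p ^ r)) ^ (r - 1)) = 0 := by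
    simpa [hne] using hP ((p : ZMod (p ^ r)) ^ (r - 1))
  -- reduce mod p
  have hdvd : p ∣ p ^ r := dvd_pow_self p (by omega)
  let f := ZMod.castHom hdvd (ZMod p)
  have hx0 : f ((p : ZMod (p ^ r)) ^ (r - 1)) = 0 := by
    have : (p : ZMod p) = 0 := by simp [ZMod.natCast_self]
    rw [map_pow, map_natCast, this, zero_pow (by omega)]
  have e1 : (P.map f).eval (f 0) = 1 := by
    rw [Polynomial.eval_map, Polynomial.eval₂_at_apply, h1, map_one]
  have e2 : (P.map f).eval (f ((p : ZMod (p ^ r)) ^ (r - 1))) = 0 := by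
    rw [Polynomial.eval_map, Polynomial.eval₂_at_apply, h2, map_zero]
  rw [map_zero] at e1
  rw [hx0] at e2
  exact one_ne_zero (e1.symm.trans e2)
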